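/- Let ℓ₁ and ℓ₂ be lines of projective spaces over a commutative field F, let μ: ℓ₁ × ℓ₂ → ℙ' be a linear map of their product into a projective space ℙ', and let A ∈ ℓ₁ be a point such that {A} × ℓ₂ is contained in D(μ). Suppose the exceptional set A(μ) consists of exactly one point (X₁, P). Then for every X ∈ ℓ₁ ∖ {A, X₁} one of the following holds: (a) ({A} × ℓ₂)μ = ({X} × ℓ₂)μ, and in this case ({X₁} × ℓ₂)μ = {(A, P)μ}; or (b) ({A} × ℓ₂)μ ∩ ({X} × ℓ₂)μ = {(A, P)μ}. -/

import Mathlib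

open Set

namespace Segre

variable {P Q : Type*}

/-- Two points are collinear w.r.t. a line set `L` if some line contains both. -/
def Collin (L : Set (Set P)) (x y : P) : Prop := ∃ g ∈ L, x ∈ g ∧ y ∈ g

/-- The union of all lines of `L` through both `x` and `y`; for distinct collinear
points of a semilinear space this is the unique line `xy`. -/
def lineThru (L : Set (Set P)) (x y : P) : Set P := ⋃ g ∈ {g ∈ L | x ∈ g ∧ y ∈ g}, g

/-- The join `M₁ ∨ M₂` of two point sets in a (semi)linear space with line set `L`. -/
def sJoin (L : Set (Set P)) (M₁ M₂ : Set P) : Set P :=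
  M₁ ∪ M₂ ∪
    ⋃ (x ∈ M₁) (y ∈ M₂) (_ : x ≠ y ∧ Collin L x y), lineThru L x y

/-- The (possibly empty) image point set `Xχ` of a single point under a partial map. -/
def ptImg (χ : P → Option Q) (X : P) : Set Q := {y | χ X = some y}

/-- The image `Mχ` of a point set under a partial map. -/
def mapSet (χ : P → Option Q) (M : Set P) : Set Q := ⋃ X ∈ M, ptImg χ X

/-- Axioms (L1) and (L2) for a linear map from the semilinear space with point set `P`
and line set `L` into the projective space with point set `Q` and line set `L'`.
Points in the exceptional set are modelled by the value `none`. -/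
def IsLinMap (L : Set (Set P)) (L' : Set (Set Q)) (χ : P → Option Q) : Prop :=
  (∀ X Y : P, Collin L X Y →
      mapSet χ (sJoin L {X} {Y}) = sJoin L' (ptImg χ X) (ptImg χ Y)) ∧
  (∀ X Y : P, Collin L X Y → X ≠ Y → ptImg χ X = ptImg χ Y →
      ∃ Z ∈ lineThru L X Y, χ Z = none)

/-- A linear map is global if its domain is everything. -/
def IsGlobal (χ : P → Option Q) : Prop := ∀ X, χ X ≠ none

/-- The lines of the product of two semilinear spaces with line sets `L₁`, `L₂`. -/
def prodLines (L₁ : Set (Set P)) (L₂ : Set (Set Q)) : Set (Set (P × Q)) :=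
  {s | (∃ X₁ : P, ∃ g₂ ∈ L₂, s = {X₁} ×ˢ g₂) ∨ ∃ g₁ ∈ L₁, ∃ X₂ : Q, s = g₁ ×ˢ {X₂}}

/-- The lines of the product of two lines `ℓ₁`, `ℓ₂` (viewed as semilinear spaces). -/
def lineProdLines (ℓ₁ : Set P) (ℓ₂ : Set Q) : Set (Set (P × Q)) :=
  {s | (∃ X ∈ ℓ₁, s = {X} ×ˢ ℓ₂) ∨ ∃ Y ∈ ℓ₂, s = ℓ₁ ×ˢ {Y}}

/-- A collineation of a projective (or semilinear) space with line set `L`: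
a bijection such that it and its inverse map lines onto lines. -/
def IsCollineation (L : Set (Set P)) (α : P → P) : Prop :=
  Function.Bijective α ∧ ∀ g : Set P, g ∈ L ↔ α '' g ∈ L

section Projective

variable {K V : Type*} [Field K] [AddCommGroup V] [Module K V]

/-- The point set of the projective line through two (distinct) points of a
projective space `ℙ K V`. -/
def projLineThrough (x y : Projectivization K V) : Set (Projectivization K V) :=
  {z | z.submodule ≤ x.submodule ⊔ y.submodule}

/-- The lines of the projective space `ℙ K V`. -/
def projLines (K V : Type*) [Field K] [AddCommGroup V] [Module K V] :
    Set (Set (Projectivization K V)) :=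
  {g | ∃ x y : Projectivization K V, x ≠ y ∧ g = projLineThrough x y}

/-- The linear span of (representatives of) a set of projective points; its projective
space is the projective closure of the set, whose projective dimension is the vector
rank of this span minus one. -/
def spanOf (M : Set (Projectivization K V)) : Submodule K V := ⨆ x ∈ M, x.submodule

/-- `E` is the point set of a plane (projective dimension 2). -/
def IsPlane (E : Set (Projectivization K V)) : Prop :=
  ∃ W : Submodule K V, Module.finrank K ↥W = 3 ∧ E = {x | x.submodule ≤ W}

/-- The family of points `A` is a projective basis of the subspace of `ℙ K V`
corresponding to the submodule `W`: the representatives are linearly independent and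
span `W`. -/
def IsProjBasisOf {ι : Type*} (A : ι → Projectivization K V) (W : Submodule K V) : Prop :=
  iSupIndep (fun i => (A i).submodule) ∧ (⨆ i, (A i).submodule) = W

end Projective

section PG

variable (F : Type*) [Field F]

/-- The point set of `PG(k, F)`. -/
abbrev PGPt (k : ℕ) := Projectivization F (Fin (k + 1) → F)

/-- The line set of `PG(k, F)`. -/
abbrev PGLines (k : ℕ) := projLines F (Fin (k + 1) → F)

variable (n m : ℕ)

/-- A regular embedding `γ : ℙ₁ × ℙ₂ → ℙ̄`, where `ℙ₁ = PG(n,F)`, `ℙ₂ = PG(m,F)` and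
`ℙ̄ = PG(nm+n+m, F)`: a global injective linear map of the product such that the
projective closure of the image has (projective) dimension `nm+n+m`. -/
def IsRegularEmbedding (γ : PGPt F n × PGPt F m → PGPt F (n * m + n + m)) : Prop :=
  IsLinMap (prodLines (PGLines F n) (PGLines F m)) (PGLines F (n * m + n + m))
      (fun p => some (γ p)) ∧
  Function.Injective γ ∧
  Module.finrank F ↥(spanOf (Set.range γ)) = n * m + n + m + 1

variable {K W : Type*} [Field K] [AddCommGroup W] [Module K W]

/-- Condition (i) on `χ`, w.r.t. the basis `B` of `ℙ₂` and the plane `E ⊆ 𝒫₁`: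
for every `i = 1, …, m` the restriction of `χ` to `E × {B 0, B i}` is global and
of rank greater than `2` (i.e. the vector rank of the span of its image exceeds `3`). -/
def CondI (χ : PGPt F n × PGPt F m → Option (Projectivization K W))
    (B : Fin (m + 1) → PGPt F m) (E : Set (PGPt F n)) : Prop :=
  IsProjBasisOf B (⊤ : Submodule F (Fin (m + 1) → F)) ∧ IsPlane E ∧
  ∀ i : Fin (m + 1), i ≠ 0 →
    (∀ p ∈ E ×ˢ ({B 0, B i} : Set (PGPt F m)), χ p ≠ none) ∧
    3 < Module.rank K ↥(spanOf (mapSet χ (E ×ˢ ({B 0, B i} : Set (PGPt F m)))))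

/-- Condition (ii) on `χ`, w.r.t. the point `A ∈ 𝒫₁`: the image `({A} × 𝒫₂)χ` has
projective dimension `m` (i.e. the vector rank of the span of the image is `m + 1`). -/
def CondII (χ : PGPt F n × PGPt F m → Option (Projectivization K W))
    (A : PGPt F n) : Prop :=
  Module.rank K ↥(spanOf (mapSet χ (({A} : Set (PGPt F n)) ×ˢ (univ : Set (PGPt F m)))))
    = (m : Cardinal) + 1

/-- `ℓ₂` is a special line for the data `χ, γ, φ, α'`: it is a line of `ℙ₂` such that
(a) `({X} × ℓ₂)γφ = ({X} × ℓ₂)αχ` for every `X ∈ 𝒫₁`, and (b) the rank of `αχ`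
restricted to `𝒫₁ × ℓ₂` is greater than `1` (vector rank of the span `> 2`). -/
def SpecialLine (χ : PGPt F n × PGPt F m → Option (Projectivization K W))
    (γ : PGPt F n × PGPt F m → PGPt F (n * m + n + m))
    (φ : PGPt F (n * m + n + m) → Option (Projectivization K W))
    (α' : PGPt F m → PGPt F m) (ℓ₂ : Set (PGPt F m)) : Prop :=
  ℓ₂ ∈ PGLines F m ∧
  (∀ X : PGPt F n,
    mapSet (fun p => φ (γ p)) (({X} : Set (PGPt F n)) ×ˢ ℓ₂) =
      mapSet (fun p : PGPt F n × PGPt F m => χ (p.1, α' p.2))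
        (({X} : Set (PGPt F n)) ×ˢ ℓ₂)) ∧
  2 < Module.rank K ↥(spanOf (mapSet (fun p : PGPt F n × PGPt F m => χ (p.1, α' p.2))
        ((univ : Set (PGPt F n)) ×ˢ ℓ₂)))

end PG

end Segre


namespace SegreAux
open Segre Set Projectivization

section Proj
variable {K W : Type*} [Field K] [AddCommGroup W] [Module K W]

lemma mem_plt_left (x y : Projectivization K W) : x ∈ projLineThrough x y := by
  simp only [projLineThrough, Set.mem_setOf_eq]; exact le_sup_left

lemma mem_plt_right (x y : Projectivization K W) : y ∈ projLineThrough x y := by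
  simp only [projLineThrough, Set.mem_setOf_eq]; exact le_sup_right

lemma sup_eq_span (x y : Projectivization K W) :
    x.submodule ⊔ y.submodule = Submodule.span K {x.rep, y.rep} := by
  rw [x.submodule_eq, y.submodule_eq, ← Submodule.span_union, Set.singleton_union]

lemma findim_sup (x y : Projectivization K W) :
    FiniteDimensional K ↥(x.submodule ⊔ y.submodule) := by
  rw [sup_eq_span]
  exact FiniteDimensional.span_of_finite K (Set.toFinite _)

lemma finrank_sup {x y : Projectivization K W} (h : x ≠ y) :
    Module.finrank K ↥(x.submodule ⊔ y.submodule) = 2 := by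
  have hi : LinearIndependent K (Projectivization.rep ∘ ![x, y]) :=
    Projectivization.independent_iff.mp ((Projectivization.independent_pair_iff_ne x y).mpr h)
  have hr : x.submodule ⊔ y.submodule
      = Submodule.span K (Set.range (Projectivization.rep ∘ ![x, y])) := by
    rw [sup_eq_span, Set.range_comp]
    congr 1
    simp [Matrix.range_cons, Matrix.range_empty, Set.image_insert_eq, Set.pair_comm]
  rw [hr, finrank_span_eq_card hi]
  simp

lemma plt_unique {u v x y : Projectivization K W} (huv : u ≠ v) (hxy : x ≠ y)
    (hx : x ∈ projLineThrough u v) (hy : y ∈ projLineThrough u v) :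
    projLineThrough x y = projLineThrough u v := by
  have hle : x.submodule ⊔ y.submodule ≤ u.submodule ⊔ v.submodule := sup_le hx hy
  have := findim_sup u v
  have heq : x.submodule ⊔ y.submodule = u.submodule ⊔ v.submodule := by
    apply Submodule.eq_of_le_of_finrank_le hle
    rw [finrank_sup huv, finrank_sup hxy]
  unfold projLineThrough
  rw [heq]

lemma plt_mem_projLines {a b : Projectivization K W} (h : a ≠ b) :
    projLineThrough a b ∈ projLines K W := ⟨a, b, h, rfl⟩

lemma collin_proj {a b : Projectivization K W} (h : a ≠ b) :
    Collin (projLines K W) a b :=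
  ⟨projLineThrough a b, plt_mem_projLines h, mem_plt_left a b, mem_plt_right a b⟩

lemma lineThru_proj {a b : Projectivization K W} (h : a ≠ b) :
    lineThru (projLines K W) a b = projLineThrough a b := by
  apply Set.Subset.antisymm
  · intro z hz
    simp only [lineThru, Set.mem_iUnion, Set.mem_setOf_eq] at hz
    obtain ⟨g, ⟨⟨⟨u, v, huv, rfl⟩, hag, hbg⟩, hzg⟩⟩ := hz
    rw [plt_unique huv h hag hbg]; exact hzg
  · intro z hz
    simp only [lineThru, Set.mem_iUnion, Set.mem_setOf_eq]
    exact ⟨projLineThrough a b, ⟨plt_mem_projLines h, mem_plt_left a b, mem_plt_right a b⟩, hz⟩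

lemma sJoin_proj {a b : Projectivization K W} (h : a ≠ b) :
    sJoin (projLines K W) {a} {b} = projLineThrough a b := by
  classical
  unfold sJoin
  rw [Set.biUnion_singleton, Set.biUnion_singleton, Set.iUnion_eq_if,
    if_pos ⟨h, collin_proj h⟩, lineThru_proj h]
  exact Set.union_eq_self_of_subset_left (Set.union_subset
    (Set.singleton_subset_iff.mpr (mem_plt_left a b))
    (Set.singleton_subset_iff.mpr (mem_plt_right a b)))

lemma line_two_points {ℓ : Set (Projectivization K W)} (h : ℓ ∈ projLines K W) :
    ∃ u v, u ≠ v ∧ u ∈ ℓ ∧ v ∈ ℓ := by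
  obtain ⟨u, v, huv, rfl⟩ := h
  exact ⟨u, v, huv, mem_plt_left u v, mem_plt_right u v⟩

end Proj

section Maps
variable {P Q : Type*}

lemma sJoin_empty_right (L : Set (Set P)) (M : Set P) : sJoin L M ∅ = M := by
  simp [sJoin]

lemma ptImg_some {χ : P → Option Q} {p : P} {a : Q} (h : χ p = some a) :
    ptImg χ p = {a} := by
  ext y; simp [ptImg, h, eq_comm]

lemma ptImg_none {χ : P → Option Q} {p : P} (h : χ p = none) : ptImg χ p = ∅ := by
  ext y; simp [ptImg, h]

lemma mem_mapSet {χ : P → Option Q} {M : Set P} {q : Q} :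
    q ∈ mapSet χ M ↔ ∃ p ∈ M, χ p = some q := by
  simp [mapSet, ptImg]

end Maps

section Prod
variable {P Q : Type*} {ℓ₁ : Set P} {ℓ₂ : Set Q}

lemma vert_mem_lines {X : P} (hX : X ∈ ℓ₁) :
    ({X} ×ˢ ℓ₂ : Set (P × Q)) ∈ lineProdLines ℓ₁ ℓ₂ := Or.inl ⟨X, hX, rfl⟩

lemma horiz_mem_lines {Y : Q} (hY : Y ∈ ℓ₂) :
    (ℓ₁ ×ˢ {Y} : Set (P × Q)) ∈ lineProdLines ℓ₁ ℓ₂ := Or.inr ⟨Y, hY, rfl⟩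

lemma collin_vert {X : P} {Y₀ Y₁ : Q} (hX : X ∈ ℓ₁) (h0 : Y₀ ∈ ℓ₂) (h1 : Y₁ ∈ ℓ₂) :
    Collin (lineProdLines ℓ₁ ℓ₂) (X, Y₀) (X, Y₁) :=
  ⟨{X} ×ˢ ℓ₂, vert_mem_lines hX, by simp [h0], by simp [h1]⟩

lemma collin_horiz {X₀ X₁ : P} {Y : Q} (h0 : X₀ ∈ ℓ₁) (h1 : X₁ ∈ ℓ₁) (hY : Y ∈ ℓ₂) :
    Collin (lineProdLines ℓ₁ ℓ₂) (X₀, Y) (X₁, Y) :=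
  ⟨ℓ₁ ×ˢ {Y}, horiz_mem_lines hY, by simp [h0], by simp [h1]⟩

lemma lineThru_vert {X : P} {Y₀ Y₁ : Q} (hX : X ∈ ℓ₁) (h0 : Y₀ ∈ ℓ₂) (h1 : Y₁ ∈ ℓ₂)
    (hne : Y₀ ≠ Y₁) :
    lineThru (lineProdLines ℓ₁ ℓ₂) (X, Y₀) (X, Y₁) = {X} ×ˢ ℓ₂ := by
  apply Set.Subset.antisymm
  · intro z hz
    simp only [lineThru, Set.mem_iUnion, Set.mem_setOf_eq] at hz
    obtain ⟨g, ⟨⟨hg, hpg, hqg⟩, hzg⟩⟩ := hz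
    rcases hg with ⟨X', hX', rfl⟩ | ⟨Y', hY', rfl⟩
    · have : X' = X := by
        have := hpg
        simp only [Set.mem_prod, Set.mem_singleton_iff] at this
        exact this.1.symm
      rwa [this] at hzg
    · exfalso
      simp only [Set.mem_prod, Set.mem_singleton_iff] at hpg hqg
      exact hne (hpg.2.trans hqg.2.symm)
  · intro z hz
    simp only [lineThru, Set.mem_iUnion, Set.mem_setOf_eq]
    exact ⟨{X} ×ˢ ℓ₂, ⟨vert_mem_lines hX, by simp [h0], by simp [h1]⟩, hz⟩

lemma lineThru_horiz {X₀ X₁ : P} {Y : Q} (h0 : X₀ ∈ ℓ₁) (h1 : X₁ ∈ ℓ₁) (hY : Y ∈ ℓ₂)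
    (hne : X₀ ≠ X₁) :
    lineThru (lineProdLines ℓ₁ ℓ₂) (X₀, Y) (X₁, Y) = ℓ₁ ×ˢ {Y} := by
  apply Set.Subset.antisymm
  · intro z hz
    simp only [lineThru, Set.mem_iUnion, Set.mem_setOf_eq] at hz
    obtain ⟨g, ⟨⟨hg, hpg, hqg⟩, hzg⟩⟩ := hz
    rcases hg with ⟨X', hX', rfl⟩ | ⟨Y', hY', rfl⟩
    · exfalso
      simp only [Set.mem_prod, Set.mem_singleton_iff] at hpg hqg
      exact hne (hpg.1.trans hqg.1.symm)
    · have : Y' = Y := by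
        have := hpg
        simp only [Set.mem_prod, Set.mem_singleton_iff] at this
        exact this.2.symm
      rwa [this] at hzg
  · intro z hz
    simp only [lineThru, Set.mem_iUnion, Set.mem_setOf_eq]
    exact ⟨ℓ₁ ×ˢ {Y}, ⟨horiz_mem_lines hY, by simp [h0], by simp [h1]⟩, hz⟩

lemma sJoin_vert {X : P} {Y₀ Y₁ : Q} (hX : X ∈ ℓ₁) (h0 : Y₀ ∈ ℓ₂) (h1 : Y₁ ∈ ℓ₂)
    (hne : Y₀ ≠ Y₁) :
    sJoin (lineProdLines ℓ₁ ℓ₂) {(X, Y₀)} {(X, Y₁)} = {X} ×ˢ ℓ₂ := by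
  have hpq : ((X, Y₀) : P × Q) ≠ (X, Y₁) := by simp [hne]
  classical
  unfold sJoin
  rw [Set.biUnion_singleton, Set.biUnion_singleton, Set.iUnion_eq_if,
    if_pos ⟨hpq, collin_vert hX h0 h1⟩, lineThru_vert hX h0 h1 hne]
  exact Set.union_eq_self_of_subset_left (Set.union_subset
    (Set.singleton_subset_iff.mpr (by simp [h0]))
    (Set.singleton_subset_iff.mpr (by simp [h1])))

lemma sJoin_horiz {X₀ X₁ : P} {Y : Q} (h0 : X₀ ∈ ℓ₁) (h1 : X₁ ∈ ℓ₁) (hY : Y ∈ ℓ₂)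
    (hne : X₀ ≠ X₁) :
    sJoin (lineProdLines ℓ₁ ℓ₂) {(X₀, Y)} {(X₁, Y)} = ℓ₁ ×ˢ {Y} := by
  have hpq : ((X₀, Y) : P × Q) ≠ (X₁, Y) := by simp [hne]
  classical
  unfold sJoin
  rw [Set.biUnion_singleton, Set.biUnion_singleton, Set.iUnion_eq_if,
    if_pos ⟨hpq, collin_horiz h0 h1 hY⟩, lineThru_horiz h0 h1 hY hne]
  exact Set.union_eq_self_of_subset_left (Set.union_subset
    (Set.singleton_subset_iff.mpr (by simp [h0]))
    (Set.singleton_subset_iff.mpr (by simp [h1])))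

end Prod

end SegreAux

open Segre Set in
/-- Proposition `slm` (i): the case of exactly one exceptional
point `(X₁, P)`. -/
theorem statement_4 (F : Type*) [Field F]
    (V₁ V₂ : Type*) [AddCommGroup V₁] [Module F V₁] [AddCommGroup V₂] [Module F V₂]
    (K W : Type*) [Field K] [AddCommGroup W] [Module K W]
    (ℓ₁ : Set (Projectivization F V₁)) (hℓ₁ : ℓ₁ ∈ projLines F V₁)
    (ℓ₂ : Set (Projectivization F V₂)) (hℓ₂ : ℓ₂ ∈ projLines F V₂)
    (μ : Projectivization F V₁ × Projectivization F V₂ → Option (Projectivization K W))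
    (hμ : IsLinMap (lineProdLines ℓ₁ ℓ₂) (projLines K W) μ)
    (A : Projectivization F V₁) (hA : A ∈ ℓ₁)
    (hdom : ∀ Y ∈ ℓ₂, μ (A, Y) ≠ none)
    (X₁ : Projectivization F V₁) (P : Projectivization F V₂)
    (hexc : {q ∈ ℓ₁ ×ˢ ℓ₂ | μ q = none} = {(X₁, P)}) :
    ∀ X ∈ ℓ₁, X ≠ A → X ≠ X₁ →
      (mapSet μ (({A} : Set (Projectivization F V₁)) ×ˢ ℓ₂) =
          mapSet μ (({X} : Set (Projectivization F V₁)) ×ˢ ℓ₂) ∧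
        mapSet μ (({X₁} : Set (Projectivization F V₁)) ×ˢ ℓ₂) = ptImg μ (A, P)) ∨
      mapSet μ (({A} : Set (Projectivization F V₁)) ×ˢ ℓ₂) ∩
          mapSet μ (({X} : Set (Projectivization F V₁)) ×ˢ ℓ₂) = ptImg μ (A, P) := by
  intro X hX hXA hXX₁
  classical
  obtain ⟨hμ1, hμ2⟩ := hμ
  -- basic consequences of hexc
  have hX₁P : (X₁, P) ∈ ℓ₁ ×ˢ ℓ₂ ∧ μ (X₁, P) = none := by
    have : (X₁, P) ∈ {q ∈ ℓ₁ ×ˢ ℓ₂ | μ q = none} := by rw [hexc]; rfl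
    exact ⟨this.1, this.2⟩
  have hX₁ : X₁ ∈ ℓ₁ := hX₁P.1.1
  have hP : P ∈ ℓ₂ := hX₁P.1.2
  have hAX₁ : A ≠ X₁ := by rintro rfl; exact hdom P hP hX₁P.2
  have hexc' : ∀ q : Projectivization F V₁ × Projectivization F V₂,
      q ∈ ℓ₁ ×ˢ ℓ₂ → μ q = none → q = (X₁, P) := by
    intro q hq hnone
    have : q ∈ {q ∈ ℓ₁ ×ˢ ℓ₂ | μ q = none} := ⟨hq, hnone⟩
    rwa [hexc] at this
  obtain ⟨a, ha⟩ : ∃ a, μ (A, P) = some a := Option.ne_none_iff_exists'.mp (hdom P hP)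
  have hdomX : ∀ X' ∈ ℓ₁, X' ≠ X₁ → ∀ Y ∈ ℓ₂, ∃ b, μ (X', Y) = some b := by
    intro X' hX' hne Y hY
    apply Option.ne_none_iff_exists'.mp
    intro hnone
    have := hexc' (X', Y) ⟨hX', hY⟩ hnone
    exact hne (congrArg Prod.fst this)
  -- injectivity on columns X' ≠ X₁
  have hcolinj : ∀ X' ∈ ℓ₁, X' ≠ X₁ → ∀ Y₀ ∈ ℓ₂, ∀ Y₁ ∈ ℓ₂, Y₀ ≠ Y₁ →
      μ (X', Y₀) ≠ μ (X', Y₁) := by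
    intro X' hX' hne Y₀ h0 Y₁ h1 hY hμeq
    obtain ⟨Z, hZ, hZnone⟩ := hμ2 (X', Y₀) (X', Y₁)
      (SegreAux.collin_vert hX' h0 h1) (by simp [hY])
      (by show {y | μ (X', Y₀) = some y} = {y | μ (X', Y₁) = some y}; rw [hμeq])
    rw [SegreAux.lineThru_vert hX' h0 h1 hY] at hZ
    simp only [Set.mem_prod, Set.mem_singleton_iff] at hZ
    have := hexc' Z ⟨by rw [hZ.1]; exact hX', hZ.2⟩ hZnone
    exact hne (by rw [← hZ.1, this])
  -- injectivity on rows Y ≠ P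
  have hrowinj : ∀ Y ∈ ℓ₂, Y ≠ P → ∀ X₀ ∈ ℓ₁, ∀ X₂ ∈ ℓ₁, X₀ ≠ X₂ →
      μ (X₀, Y) ≠ μ (X₂, Y) := by
    intro Y hY hYP X₀ h0 X₂ h2 hXne hμeq
    obtain ⟨Z, hZ, hZnone⟩ := hμ2 (X₀, Y) (X₂, Y)
      (SegreAux.collin_horiz h0 h2 hY) (by simp [hXne])
      (by show {y | μ (X₀, Y) = some y} = {y | μ (X₂, Y) = some y}; rw [hμeq])
    rw [SegreAux.lineThru_horiz h0 h2 hY hXne] at hZ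
    simp only [Set.mem_prod, Set.mem_singleton_iff] at hZ
    have := hexc' Z ⟨hZ.1, by rw [hZ.2]; exact hY⟩ hZnone
    exact hYP (by rw [← hZ.2, this])
  -- the row through P collapses to {a}
  have hrowP : mapSet μ (ℓ₁ ×ˢ ({P} : Set (Projectivization F V₂))) = {a} := by
    have h1 := hμ1 (A, P) (X₁, P) (SegreAux.collin_horiz hA hX₁ hP)
    rw [SegreAux.sJoin_horiz hA hX₁ hP hAX₁, SegreAux.ptImg_some ha,
      SegreAux.ptImg_none hX₁P.2, SegreAux.sJoin_empty_right] at h1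
    exact h1
  have hXP : ∀ X' ∈ ℓ₁, X' ≠ X₁ → μ (X', P) = some a := by
    intro X' hX' hne
    obtain ⟨b, hb⟩ := hdomX X' hX' hne P hP
    have hbmem : b ∈ mapSet μ (ℓ₁ ×ˢ ({P} : Set (Projectivization F V₂))) :=
      SegreAux.mem_mapSet.mpr ⟨(X', P), by simp [hX'], hb⟩
    rw [hrowP, Set.mem_singleton_iff] at hbmem
    rw [hb, hbmem]
  -- two distinct points on ℓ₂
  obtain ⟨u, v, huv, hu, hv⟩ := SegreAux.line_two_points hℓ₂
  -- column images are projective lines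
  have hcolline : ∀ X' ∈ ℓ₁, X' ≠ X₁ → ∃ c d : Projectivization K W, c ≠ d ∧
      mapSet μ (({X'} : Set (Projectivization F V₁)) ×ˢ ℓ₂) = projLineThrough c d := by
    intro X' hX' hne
    obtain ⟨c, hc⟩ := hdomX X' hX' hne u hu
    obtain ⟨d, hd⟩ := hdomX X' hX' hne v hv
    have hcd : c ≠ d := by
      rintro rfl; exact hcolinj X' hX' hne u hu v hv huv (hc.trans hd.symm)
    refine ⟨c, d, hcd, ?_⟩
    have h1 := hμ1 (X', u) (X', v) (SegreAux.collin_vert hX' hu hv)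
    rw [SegreAux.sJoin_vert hX' hu hv huv, SegreAux.ptImg_some hc,
      SegreAux.ptImg_some hd, SegreAux.sJoin_proj hcd] at h1
    exact h1
  have haA : a ∈ mapSet μ (({A} : Set (Projectivization F V₁)) ×ˢ ℓ₂) :=
    SegreAux.mem_mapSet.mpr ⟨(A, P), by simp [hP], ha⟩
  have haX : a ∈ mapSet μ (({X} : Set (Projectivization F V₁)) ×ˢ ℓ₂) :=
    SegreAux.mem_mapSet.mpr ⟨(X, P), by simp [hP], hXP X hX hXX₁⟩
  have hptax : ptImg μ (A, P) = {a} := SegreAux.ptImg_some ha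
  obtain ⟨c, d, hcd, hgA⟩ := hcolline A hA hAX₁
  obtain ⟨c', d', hcd', hgX⟩ := hcolline X hX hXX₁
  by_cases hcase : mapSet μ (({A} : Set (Projectivization F V₁)) ×ˢ ℓ₂)
      = mapSet μ (({X} : Set (Projectivization F V₁)) ×ˢ ℓ₂)
  · left
    refine ⟨hcase, ?_⟩
    -- rows Y ≠ P map onto the common line
    have hrow : ∀ Y ∈ ℓ₂, Y ≠ P →
        mapSet μ (ℓ₁ ×ˢ ({Y} : Set (Projectivization F V₂)))
          = mapSet μ (({A} : Set (Projectivization F V₁)) ×ˢ ℓ₂) := by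
      intro Y hY hYP
      obtain ⟨b₀, hb₀⟩ := hdomX A hA hAX₁ Y hY
      obtain ⟨b₁, hb₁⟩ := hdomX X hX hXX₁ Y hY
      have hb : b₀ ≠ b₁ := by
        rintro rfl
        exact hrowinj Y hY hYP A hA X hX (Ne.symm hXA) (hb₀.trans hb₁.symm)
      have h1 := hμ1 (A, Y) (X, Y) (SegreAux.collin_horiz hA hX hY)
      rw [SegreAux.sJoin_horiz hA hX hY (Ne.symm hXA), SegreAux.ptImg_some hb₀,
        SegreAux.ptImg_some hb₁, SegreAux.sJoin_proj hb] at h1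
      rw [h1, hgA]
      apply SegreAux.plt_unique hcd hb
      · rw [← hgA]; exact SegreAux.mem_mapSet.mpr ⟨(A, Y), by simp [hY], hb₀⟩
      · rw [← hgA, hcase]; exact SegreAux.mem_mapSet.mpr ⟨(X, Y), by simp [hY], hb₁⟩
    have hX₁val : ∀ Y ∈ ℓ₂, Y ≠ P → μ (X₁, Y) = some a := by
      intro Y hY hYP
      have haRow : a ∈ mapSet μ (ℓ₁ ×ˢ ({Y} : Set (Projectivization F V₂))) := by
        rw [hrow Y hY hYP]; exact haA
      obtain ⟨p, hp, hpa⟩ := SegreAux.mem_mapSet.mp haRow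
      obtain ⟨X', Y'⟩ := p
      simp only [Set.mem_prod, Set.mem_singleton_iff] at hp
      obtain ⟨hp1, rfl⟩ := hp
      have hX'X₁ : X' = X₁ := by
        by_contra hne
        exact hcolinj X' hp1 hne Y' hY P hP hYP
          (hpa.trans (hXP X' hp1 hne).symm)
      rw [← hX'X₁]; exact hpa
    rw [hptax]
    ext z
    simp only [Set.mem_singleton_iff]
    constructor
    · intro hz
      obtain ⟨p, hp, hpz⟩ := SegreAux.mem_mapSet.mp hz
      obtain ⟨X', Y'⟩ := p
      simp only [Set.mem_prod, Set.mem_singleton_iff] at hp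
      by_cases hYP : Y' = P
      · exfalso
        rw [hp.1, hYP, hX₁P.2] at hpz
        exact Option.some_ne_none z hpz.symm
      · have := hX₁val Y' hp.2 hYP
        rw [hp.1, this] at hpz
        exact (Option.some_injective _ hpz).symm
    · rintro rfl
      have hYex : ∃ Y ∈ ℓ₂, Y ≠ P := by
        by_cases h : u = P
        · exact ⟨v, hv, by rw [← h]; exact huv.symm⟩
        · exact ⟨u, hu, h⟩
      obtain ⟨Y, hY, hYP⟩ := hYex
      exact SegreAux.mem_mapSet.mpr ⟨(X₁, Y), by simp [hY], hX₁val Y hY hYP⟩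
  · right
    rw [hptax]
    ext z
    simp only [Set.mem_inter_iff, Set.mem_singleton_iff]
    constructor
    · rintro ⟨hzA, hzX⟩
      by_contra hza
      apply hcase
      rw [hgA, hgX]
      rw [hgA] at hzA haA
      rw [hgX] at hzX haX
      rw [← SegreAux.plt_unique hcd (Ne.symm hza) haA hzA,
        ← SegreAux.plt_unique hcd' (Ne.symm hza) haX hzX]
    · rintro rfl
      exact ⟨haA, haX⟩
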